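/- For every g = (g_1,…,g_n) ∈ ℤ^n and every α ∈ ℂ^n: σ_1^{g_1}σ_2^{g_2}⋯σ_n^{g_n}(m_α) = m_α if and only if for every j ∈ {1,…,n} one has (q_1^{g_1} q_2^{g_2} ⋯ q_j^{g_j} − 1)·γ_j = 0. In other words, the isotropy group ℤ^n_ω = {g ∈ ℤ^n : g(m_α) = m_α} equals {g ∈ ℤ^n : (q_1^{g_1}⋯q_j^{g_j} − 1)γ_j = 0 for all j = 1,…,n}. -/
import Mathlib


open MvPolynomial

namespace Stmt8Aux

variable {n : ℕ}

lemma sub_C_aeval_mem (α : Fin n → ℂ) (p : MvPolynomial (Fin n) ℂ) :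
    p - C (aeval α p) ∈ Ideal.span (Set.range fun j : Fin n => X j - C (α j)) := by
  induction p using MvPolynomial.induction_on with
  | C a => simp
  | add p r hp hr =>
      have h := Ideal.add_mem _ hp hr
      simpa [add_sub_add_comm] using h
  | mul_X p j hp =>
      have h1 : (X j - C (α j) : MvPolynomial (Fin n) ℂ)
          ∈ Ideal.span (Set.range fun j : Fin n => X j - C (α j)) :=
        Ideal.subset_span ⟨j, rfl⟩
      have key : p * X j - C (aeval α (p * X j))
          = p * (X j - C (α j)) + C (α j) * (p - C (aeval α p)) := by
        simp only [map_mul, aeval_X]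
        ring
      rw [key]
      exact Ideal.add_mem _ (Ideal.mul_mem_left _ _ h1) (Ideal.mul_mem_left _ _ hp)

lemma mem_span_iff (α : Fin n → ℂ) (p : MvPolynomial (Fin n) ℂ) :
    p ∈ Ideal.span (Set.range fun j : Fin n => X j - C (α j)) ↔ aeval α p = 0 := by
  constructor
  · intro hp
    have hle : Ideal.span (Set.range fun j : Fin n => X j - C (α j))
        ≤ RingHom.ker (aeval α : MvPolynomial (Fin n) ℂ →ₐ[ℂ] ℂ) := by
      rw [Ideal.span_le]
      rintro x ⟨j, rfl⟩
      simp [RingHom.mem_ker]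
    exact hle hp
  · intro h
    have := sub_C_aeval_mem α p
    rwa [h, map_zero, sub_zero] at this

lemma map_eq_iff (α : Fin n → ℂ)
    (Φ : MvPolynomial (Fin n) ℂ ≃ₐ[ℂ] MvPolynomial (Fin n) ℂ) :
    Ideal.map Φ (Ideal.span (Set.range fun j : Fin n => X j - C (α j)))
        = Ideal.span (Set.range fun j : Fin n => X j - C (α j))
      ↔ ∀ j, aeval α (Φ (X j)) = α j := by
  set M := Ideal.span (Set.range fun j : Fin n => X j - C (α j)) with hM
  constructor
  · intro h
    have hle : Ideal.map Φ M ≤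
        RingHom.ker ((aeval α).comp (Φ.symm : MvPolynomial (Fin n) ℂ →ₐ[ℂ] MvPolynomial (Fin n) ℂ)) := by
      rw [Ideal.map_le_iff_le_comap]
      intro x hx
      rw [Ideal.mem_comap, RingHom.mem_ker]
      show aeval α (Φ.symm (Φ x)) = 0
      rw [AlgEquiv.symm_apply_apply]
      exact (mem_span_iff α x).mp hx
    rw [h] at hle
    have hgen : ∀ j : Fin n, aeval α (Φ.symm (X j)) = α j := by
      intro j
      have hj := hle (Ideal.subset_span ⟨j, rfl⟩)
      rw [RingHom.mem_ker] at hj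
      have : aeval α (Φ.symm (X j - C (α j))) = 0 := hj
      rw [map_sub, ← MvPolynomial.algebraMap_eq, AlgEquiv.commutes, map_sub] at this
      simp only [MvPolynomial.algebraMap_eq, aeval_C, Algebra.algebraMap_self_apply] at this
      exact sub_eq_zero.mp this
    have hext : (aeval α).comp (Φ.symm : MvPolynomial (Fin n) ℂ →ₐ[ℂ] MvPolynomial (Fin n) ℂ)
        = aeval α := by
      apply MvPolynomial.algHom_ext
      intro j
      simpa using hgen j
    intro j
    have := DFunLike.congr_fun hext (Φ (X j))
    simpa using this.symm
  · intro h
    have hext : (aeval α).comp (Φ : MvPolynomial (Fin n) ℂ →ₐ[ℂ] MvPolynomial (Fin n) ℂ)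
        = aeval α := by
      apply MvPolynomial.algHom_ext
      intro j
      simpa using h j
    have hE : ∀ p, aeval α (Φ p) = aeval α p := fun p => by
      simpa using DFunLike.congr_fun hext p
    have hE' : ∀ p, aeval α (Φ.symm p) = aeval α p := fun p => by
      have := hE (Φ.symm p)
      rw [AlgEquiv.apply_symm_apply] at this
      exact this.symm
    apply le_antisymm
    · rw [Ideal.map_le_iff_le_comap]
      intro x hx
      rw [Ideal.mem_comap, mem_span_iff, hE]
      exact (mem_span_iff α x).mp hx
    · intro x hx
      have hmem : Φ.symm x ∈ M := by
        rw [hM, mem_span_iff, hE']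
        exact (mem_span_iff α x).mp hx
      have := Ideal.mem_map_of_mem Φ hmem
      rwa [AlgEquiv.apply_symm_apply] at this

lemma pow_nat_scale (φ : MvPolynomial (Fin n) ℂ ≃ₐ[ℂ] MvPolynomial (Fin n) ℂ)
    (c : ℂ) (p : MvPolynomial (Fin n) ℂ) (h : φ p = C c * p) :
    ∀ m : ℕ, (φ ^ m) p = C (c ^ m) * p := by
  intro m
  induction m with
  | zero => simp
  | succ k ih =>
    have hC : (φ ^ k) (C c) = C c := by
      rw [← MvPolynomial.algebraMap_eq]; exact AlgEquiv.commutes _ c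
    rw [pow_succ, AlgEquiv.mul_apply, h, map_mul, ih, hC, pow_succ, map_mul]
    ring

lemma zpow_scale (φ : MvPolynomial (Fin n) ℂ ≃ₐ[ℂ] MvPolynomial (Fin n) ℂ)
    (c : ℂ) (hc : c ≠ 0) (p : MvPolynomial (Fin n) ℂ) (h : φ p = C c * p) :
    ∀ m : ℤ, (φ ^ m) p = C (c ^ m) * p := by
  have hinv : φ⁻¹ p = C c⁻¹ * p := by
    apply φ.injective
    show φ (φ.symm p) = _
    rw [AlgEquiv.apply_symm_apply, map_mul, ← MvPolynomial.algebraMap_eq,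
      AlgEquiv.commutes, MvPolynomial.algebraMap_eq, h, ← mul_assoc, ← map_mul,
      inv_mul_cancel₀ hc, map_one, one_mul]
  intro m
  cases m with
  | ofNat k => simpa using pow_nat_scale φ c p h k
  | negSucc k =>
    rw [zpow_negSucc, ← inv_pow, pow_nat_scale φ⁻¹ c⁻¹ p hinv (k + 1),
      zpow_negSucc, ← inv_pow]

lemma sigma_U (q : Fin n → ℂ)
    (σ : Fin n → (MvPolynomial (Fin n) ℂ ≃ₐ[ℂ] MvPolynomial (Fin n) ℂ))
    (hσ : ∀ i j : Fin n, σ i (X j) =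
      if j < i then X j
      else if j = i then
        1 + C (q i) * X i + ∑ k ∈ Finset.Iio i, C (q k - 1) * X k
      else C (q i) * X j)
    (i j : Fin n) :
    σ i (1 + ∑ k ∈ Finset.Iic j, C (q k - 1) * X k)
      = C (if i ≤ j then q i else 1)
        * (1 + ∑ k ∈ Finset.Iic j, C (q k - 1) * X k) := by
  have hC : ∀ a : ℂ, σ i (C a) = C a := fun a => by
    rw [← MvPolynomial.algebraMap_eq]; exact (σ i).commutes a
  by_cases hij : i ≤ j
  · rw [if_pos hij]
    have hij' : (i : ℕ) ≤ (j : ℕ) := hij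
    have hsplit : Finset.Iic j = insert i (Finset.Iio i) ∪ Finset.Ioc i j := by
      ext x
      simp only [Finset.mem_Iic, Finset.mem_union, Finset.mem_insert,
        Finset.mem_Iio, Finset.mem_Ioc, Fin.le_def, Fin.lt_def, Fin.ext_iff]
      omega
    have hdisj : Disjoint (insert i (Finset.Iio i)) (Finset.Ioc i j) := by
      rw [Finset.disjoint_left]
      intro x hx hx'
      simp only [Finset.mem_insert, Finset.mem_Iio] at hx
      simp only [Finset.mem_Ioc] at hx'
      rcases hx with rfl | hx
      · exact lt_irrefl x hx'.1
      · exact absurd hx'.1 (not_lt.mpr hx.le)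
    have hnmem : i ∉ Finset.Iio i := by simp
    rw [hsplit, Finset.sum_union hdisj, Finset.sum_insert hnmem]
    have hXi : σ i (X i) = 1 + C (q i) * X i + ∑ k ∈ Finset.Iio i, C (q k - 1) * X k := by
      rw [hσ i i, if_neg (lt_irrefl i), if_pos rfl]
    have hIio : ∑ k ∈ Finset.Iio i, C (q k - 1) * σ i (X k)
        = ∑ k ∈ Finset.Iio i, C (q k - 1) * X k :=
      Finset.sum_congr rfl fun k hk => by
        rw [hσ i k, if_pos (Finset.mem_Iio.mp hk)]
    have hIoc : ∑ k ∈ Finset.Ioc i j, C (q k - 1) * σ i (X k)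
        = C (q i) * ∑ k ∈ Finset.Ioc i j, C (q k - 1) * X k := by
      rw [Finset.mul_sum]
      refine Finset.sum_congr rfl fun k hk => ?_
      have hik : i < k := (Finset.mem_Ioc.mp hk).1
      rw [hσ i k, if_neg (not_lt.mpr hik.le), if_neg hik.ne']
      ring
    simp only [map_add, map_one, map_mul, map_sum, hC, hXi]
    rw [hIio, hIoc]
    have hCsub : (C (q i - 1) : MvPolynomial (Fin n) ℂ) = C (q i) - 1 := by
      rw [map_sub, map_one]
    rw [hCsub]
    ring
  · rw [if_neg hij, map_one, one_mul]
    have hlt : ∀ k ∈ Finset.Iic j, k < i := fun k hk =>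
      lt_of_le_of_lt (Finset.mem_Iic.mp hk) (not_le.mp hij)
    simp only [map_add, map_one, map_mul, map_sum, hC]
    congr 1
    exact Finset.sum_congr rfl fun k hk => by rw [hσ i k, if_pos (hlt k hk)]

lemma list_prod_U (q : Fin n → ℂ) (hq : ∀ i, q i ≠ 0 ∧ q i ≠ 1)
    (σ : Fin n → (MvPolynomial (Fin n) ℂ ≃ₐ[ℂ] MvPolynomial (Fin n) ℂ))
    (hσ : ∀ i j : Fin n, σ i (X j) =
      if j < i then X j
      else if j = i then
        1 + C (q i) * X i + ∑ k ∈ Finset.Iio i, C (q k - 1) * X k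
      else C (q i) * X j)
    (g : Fin n → ℤ) (j : Fin n) (l : List (Fin n)) :
    (l.map fun i => σ i ^ g i).prod (1 + ∑ k ∈ Finset.Iic j, C (q k - 1) * X k)
      = C ((l.map fun i => if i ≤ j then q i ^ g i else 1).prod)
        * (1 + ∑ k ∈ Finset.Iic j, C (q k - 1) * X k) := by
  induction l with
  | nil => simp
  | cons a l ih =>
    have hscale : (σ a ^ g a) (1 + ∑ k ∈ Finset.Iic j, C (q k - 1) * X k)
        = C ((if a ≤ j then q a else 1) ^ g a)
          * (1 + ∑ k ∈ Finset.Iic j, C (q k - 1) * X k) := by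
      apply zpow_scale
      · split
        · exact (hq a).1
        · exact one_ne_zero
      · exact sigma_U q σ hσ a j
    have hCconst : (σ a ^ g a)
        (C ((l.map fun i => if i ≤ j then q i ^ g i else 1).prod))
        = C ((l.map fun i => if i ≤ j then q i ^ g i else 1).prod) := by
      rw [← MvPolynomial.algebraMap_eq]; exact AlgEquiv.commutes _ _
    rw [List.map_cons, List.prod_cons, AlgEquiv.mul_apply, List.map_cons,
      List.prod_cons, ih, map_mul, hCconst, hscale]
    have : ((if a ≤ j then q a else 1) ^ g a : ℂ) = if a ≤ j then q a ^ g a else 1 := by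
      split <;> simp
    rw [this, map_mul]
    ring

lemma prod_U (q : Fin n → ℂ) (hq : ∀ i, q i ≠ 0 ∧ q i ≠ 1)
    (σ : Fin n → (MvPolynomial (Fin n) ℂ ≃ₐ[ℂ] MvPolynomial (Fin n) ℂ))
    (hσ : ∀ i j : Fin n, σ i (X j) =
      if j < i then X j
      else if j = i then
        1 + C (q i) * X i + ∑ k ∈ Finset.Iio i, C (q k - 1) * X k
      else C (q i) * X j)
    (g : Fin n → ℤ) (j : Fin n) :
    (List.ofFn fun i => σ i ^ g i).prod (1 + ∑ k ∈ Finset.Iic j, C (q k - 1) * X k)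
      = C (∏ i ∈ Finset.Iic j, q i ^ g i)
        * (1 + ∑ k ∈ Finset.Iic j, C (q k - 1) * X k) := by
  rw [List.ofFn_eq_map, list_prod_U q hq σ hσ g j]
  congr 2
  rw [← List.ofFn_eq_map, Fin.prod_ofFn]
  rw [← Finset.prod_filter]
  congr 1
  ext x
  simp

end Stmt8Aux

/-- the isotropy group of `m_α`: `σ_1^{g_1}⋯σ_n^{g_n}(m_α) = m_α` iff
`(q_1^{g_1}⋯q_j^{g_j} − 1)·γ_j = 0` for all `j = 1, …, n`. -/
theorem stmt_8 (n : ℕ) (hn : 1 ≤ n) (q : Fin n → ℂ)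
    (hq : ∀ i, q i ≠ 0 ∧ q i ≠ 1)
    (σ : Fin n → (MvPolynomial (Fin n) ℂ ≃ₐ[ℂ] MvPolynomial (Fin n) ℂ))
    (hσ : ∀ i j : Fin n, σ i (X j) =
      if j < i then X j
      else if j = i then
        1 + C (q i) * X i + ∑ k ∈ Finset.Iio i, C (q k - 1) * X k
      else C (q i) * X j)
    (α : Fin n → ℂ) :
    ∀ g : Fin n → ℤ,
      Ideal.map ((List.ofFn fun i => σ i ^ g i).prod :
            MvPolynomial (Fin n) ℂ ≃ₐ[ℂ] MvPolynomial (Fin n) ℂ)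
          (Ideal.span (Set.range fun j : Fin n => X j - C (α j)))
        = Ideal.span (Set.range fun j : Fin n => X j - C (α j))
      ↔ ∀ j : Fin n,
          ((∏ i ∈ Finset.Iic j, q i ^ (g i)) - 1)
            * (1 + ∑ k ∈ Finset.Iic j, (q k - 1) * α k) = 0 := by
  intro g
  rw [Stmt8Aux.map_eq_iff α]
  have hΦC : ∀ a : ℂ, (List.ofFn fun i => σ i ^ g i).prod (C a) = C a := fun a => by
    rw [← MvPolynomial.algebraMap_eq]; exact AlgEquiv.commutes _ _
  have expand : ∀ j : Fin n,
      (aeval α) ((List.ofFn fun i => σ i ^ g i).prod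
          (1 + ∑ k ∈ Finset.Iic j, C (q k - 1) * X k))
        = 1 + ∑ k ∈ Finset.Iic j, (q k - 1)
            * aeval α ((List.ofFn fun i => σ i ^ g i).prod (X k)) := by
    intro j
    rw [map_add, map_one, map_sum, map_add, map_one, map_sum]
    congr 1
    refine Finset.sum_congr rfl fun k _ => ?_
    rw [map_mul, hΦC, map_mul]
    simp
  have key : ∀ j : Fin n,
      1 + ∑ k ∈ Finset.Iic j, (q k - 1)
          * aeval α ((List.ofFn fun i => σ i ^ g i).prod (X k))
        = (∏ i ∈ Finset.Iic j, q i ^ g i)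
            * (1 + ∑ k ∈ Finset.Iic j, (q k - 1) * α k) := by
    intro j
    rw [← expand j, Stmt8Aux.prod_U q hq σ hσ g j, map_mul]
    simp
  constructor
  · intro h j
    have hk := key j
    simp only [h] at hk
    linear_combination -hk
  · intro h
    have heq : ∀ j : Fin n,
        1 + ∑ k ∈ Finset.Iic j, (q k - 1)
            * aeval α ((List.ofFn fun i => σ i ^ g i).prod (X k))
          = 1 + ∑ k ∈ Finset.Iic j, (q k - 1) * α k := by
      intro j
      rw [key j]
      linear_combination h j
    have main : ∀ m : ℕ, ∀ j : Fin n, (j : ℕ) < m →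
        aeval α ((List.ofFn fun i => σ i ^ g i).prod (X j)) = α j := by
      intro m
      induction m with
      | zero => intro j hj; exact absurd hj (Nat.not_lt_zero _)
      | succ m ih =>
        intro j hj
        by_cases hjm : (j : ℕ) < m
        · exact ih j hjm
        · have hj' := heq j
          rw [← Finset.Iio_insert, Finset.sum_insert (by simp),
            Finset.sum_insert (by simp)] at hj'
          have hsum : ∑ k ∈ Finset.Iio j, (q k - 1)
                * aeval α ((List.ofFn fun i => σ i ^ g i).prod (X k))
              = ∑ k ∈ Finset.Iio j, (q k - 1) * α k :=
            Finset.sum_congr rfl fun k hk => by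
              rw [ih k (by
                have hkj : k < j := Finset.mem_Iio.mp hk
                have hkj' : (k : ℕ) < (j : ℕ) := hkj
                omega)]
          have hcancel : (q j - 1) * aeval α ((List.ofFn fun i => σ i ^ g i).prod (X j))
              = (q j - 1) * α j := by
            linear_combination hj' - hsum
          exact mul_left_cancel₀ (sub_ne_zero.mpr (hq j).2) hcancel
    intro j
    exact main n j j.isLt
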